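/- For every n ∈ ℤ, the function Vₙ is differentiable on gₙ, its derivative is Vₙ'(x) = (1/π)∫_{g∖gₙ} v(t) / ((t − x)|t − x| vₙ(t)) dt, and |Vₙ'(x)| ≤ Vₙ(x)/ρₙ for all x ∈ gₙ. -/

import Mathlib

open MeasureTheory Metric Set

theorem stmt_16
    (zm zp : ℤ → ℝ)
    (hz : ∀ n, zm n < zp n)
    (hsep : ∀ n, zp n < zm (n + 1))
    (v : ℝ → ℝ)
    (hvmeas : Measurable v)
    (hvint : MeasureTheory.Integrable v)
    (hvnn : ∀ t, 0 ≤ v t)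
    (hvsupp : ∀ t ∉ ⋃ n : ℤ, Set.Ioo (zm n) (zp n), v t = 0)
    (vn : ℤ → ℝ → ℝ)
    (hvn : ∀ n x, vn n x = Real.sqrt (|x - zm n| * |x - zp n|))
    (ρ : ℤ → ℝ)
    (hρ : ∀ n, ρ n = sInf (Set.image2 dist (Set.Ioo (zm n) (zp n))
      ((⋃ m : ℤ, Set.Ioo (zm m) (zp m)) \ Set.Ioo (zm n) (zp n))))
    (hρpos : ∀ n, 0 < ρ n)
    (Vn : ℤ → ℝ → ℝ)
    (hVn : ∀ n x, Vn n x = (1 / Real.pi) *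
      ∫ t in ((⋃ m : ℤ, Set.Ioo (zm m) (zp m)) \ Set.Ioo (zm n) (zp n)),
        v t / (|t - x| * vn n t))
    :
    ∀ n : ℤ, ∀ x ∈ Set.Ioo (zm n) (zp n),
      HasDerivAt (Vn n) ((1 / Real.pi) *
        ∫ t in ((⋃ m : ℤ, Set.Ioo (zm m) (zp m)) \ Set.Ioo (zm n) (zp n)),
          v t / ((t - x) * |t - x| * vn n t)) x ∧
      |(1 / Real.pi) *
        ∫ t in ((⋃ m : ℤ, Set.Ioo (zm m) (zp m)) \ Set.Ioo (zm n) (zp n)),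
          v t / ((t - x) * |t - x| * vn n t)| ≤ Vn n x / ρ n := by
  intro n x hx
  set S : Set ℝ := (⋃ m : ℤ, Set.Ioo (zm m) (zp m)) \ Set.Ioo (zm n) (zp n) with hSdef
  have hρn : 0 < ρ n := hρpos n
  have hSmeas : MeasurableSet S :=
    (MeasurableSet.iUnion fun m => measurableSet_Ioo).diff measurableSet_Ioo
  -- ρ is a lower bound for distances from points of the gap to points of S
  have hdist : ∀ y ∈ Set.Ioo (zm n) (zp n), ∀ t ∈ S, ρ n ≤ |t - y| := by
    intro y hy t ht
    have hmem : dist y t ∈ Set.image2 dist (Set.Ioo (zm n) (zp n)) S :=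
      Set.mem_image2_of_mem hy ht
    have hbdd : BddBelow (Set.image2 dist (Set.Ioo (zm n) (zp n)) S) := by
      refine ⟨0, ?_⟩
      rintro d ⟨a, _, b, _, rfl⟩
      exact dist_nonneg
    have := csInf_le hbdd hmem
    rw [← hρ n] at this
    calc ρ n ≤ dist y t := this
      _ = |t - y| := by rw [dist_comm, Real.dist_eq]
  -- distances to the endpoints are also at least ρ
  have hend : ∀ t ∈ S, ρ n ≤ |t - zm n| ∧ ρ n ≤ |t - zp n| := by
    intro t ht
    have hnot : ¬ (zm n < t ∧ t < zp n) := by simpa [Set.mem_Ioo] using ht.2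
    have hzn := hz n
    rcases le_or_gt t (zm n) with hcase | hcase
    · -- t to the left
      have h1 : ρ n ≤ zm n - t := by
        by_contra hcon
        push_neg at hcon
        set δ : ℝ := min (ρ n - (zm n - t)) (zp n - zm n) / 2 with hδ
        have hδpos : 0 < δ := by
          have : 0 < ρ n - (zm n - t) := by linarith
          have : 0 < min (ρ n - (zm n - t)) (zp n - zm n) := lt_min this (by linarith)
          positivity
        have hy' : zm n + δ ∈ Set.Ioo (zm n) (zp n) := by
          constructor
          · linarith
          · have : δ < zp n - zm n := by
              have := min_le_right (ρ n - (zm n - t)) (zp n - zm n)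
              linarith
            linarith
        have := hdist _ hy' t ht
        rw [abs_of_nonpos (by linarith)] at this
        have : δ < ρ n - (zm n - t) := by
          have := min_le_left (ρ n - (zm n - t)) (zp n - zm n)
          linarith
        linarith [hdist _ hy' t ht, abs_of_nonpos (show t - (zm n + δ) ≤ 0 by linarith)]
      constructor
      · rw [abs_of_nonpos (by linarith)]; linarith
      · rw [abs_of_nonpos (by linarith)]; linarith
    · -- t to the right
      have hge : zp n ≤ t := by
        by_contra hcon
        push_neg at hcon
        exact hnot ⟨hcase, hcon⟩
      have h1 : ρ n ≤ t - zp n := by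
        by_contra hcon
        push_neg at hcon
        set δ : ℝ := min (ρ n - (t - zp n)) (zp n - zm n) / 2 with hδ
        have hδpos : 0 < δ := by
          have : 0 < ρ n - (t - zp n) := by linarith
          have : 0 < min (ρ n - (t - zp n)) (zp n - zm n) := lt_min this (by linarith)
          positivity
        have hy' : zp n - δ ∈ Set.Ioo (zm n) (zp n) := by
          constructor
          · have : δ < zp n - zm n := by
              have := min_le_right (ρ n - (t - zp n)) (zp n - zm n)
              linarith
            linarith
          · linarith
        have hlt : δ < ρ n - (t - zp n) := by
          have := min_le_left (ρ n - (t - zp n)) (zp n - zm n)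
          linarith
        linarith [hdist _ hy' t ht, abs_of_nonneg (show (0:ℝ) ≤ t - (zp n - δ) by linarith)]
      constructor
      · rw [abs_of_nonneg (by linarith)]; linarith
      · rw [abs_of_nonneg (by linarith)]; linarith
  -- vn is bounded below by ρ on S
  have hvnS : ∀ t ∈ S, ρ n ≤ vn n t := by
    intro t ht
    rw [hvn]
    have h := hend t ht
    calc ρ n = Real.sqrt (ρ n * ρ n) := (Real.sqrt_mul_self hρn.le).symm
      _ ≤ Real.sqrt (|t - zm n| * |t - zp n|) := by
          apply Real.sqrt_le_sqrt
          exact mul_le_mul h.1 h.2 hρn.le (abs_nonneg _)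
  -- measurability of vn
  have hvnmeas : Measurable (vn n) := by
    have : Measurable fun t : ℝ => Real.sqrt (|t - zm n| * |t - zp n|) :=
      (((measurable_id.sub measurable_const).abs).mul
        ((measurable_id.sub measurable_const).abs)).sqrt
    simpa [funext (hvn n)] using this
  set μ : Measure ℝ := volume.restrict S with hμ
  set F : ℝ → ℝ → ℝ := fun y t => v t / (|t - y| * vn n t) with hF
  set F' : ℝ → ℝ → ℝ := fun y t => v t / ((t - y) * |t - y| * vn n t) with hF'
  have hFmeas : ∀ y : ℝ, AEStronglyMeasurable (F y) μ := by
    intro y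
    exact (hvmeas.div (((measurable_id.sub measurable_const).abs).mul
      hvnmeas)).aestronglyMeasurable
  have hF'meas : ∀ y : ℝ, AEStronglyMeasurable (F' y) μ := by
    intro y
    exact (hvmeas.div (((measurable_id.sub measurable_const).mul
      ((measurable_id.sub measurable_const).abs)).mul hvnmeas)).aestronglyMeasurable
  have hvintS : Integrable v μ := hvint.restrict
  obtain ⟨hx1, hx2⟩ := hx
  set ε : ℝ := min (x - zm n) (zp n - x) with hε
  have hεpos : 0 < ε := lt_min (by linarith) (by linarith)
  have hball : ball x ε ⊆ Set.Ioo (zm n) (zp n) := by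
    intro y hy
    rw [Real.ball_eq_Ioo] at hy
    have h1 := min_le_left (x - zm n) (zp n - x)
    have h2 := min_le_right (x - zm n) (zp n - x)
    exact ⟨by cases hy; linarith, by cases hy; linarith⟩
  -- pointwise facts for t ∈ S, y ∈ ball x ε
  have hFbound : ∀ t ∈ S, ∀ y ∈ Set.Ioo (zm n) (zp n),
      F y t ≤ v t * ((ρ n * ρ n)⁻¹) := by
    intro t ht y hy
    have hd := hdist y hy t ht
    have hw := hvnS t ht
    show v t / (|t - y| * vn n t) ≤ v t * (ρ n * ρ n)⁻¹
    rw [← div_eq_mul_inv]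
    exact div_le_div_of_nonneg_left (hvnn t) (by positivity)
      (mul_le_mul hd hw hρn.le (abs_nonneg _))
  -- key nonnegativity / norms of F'
  have hF'norm : ∀ t ∈ S, ∀ y : ℝ, ‖F' y t‖ = v t / (|t - y| * |t - y| * vn n t) := by
    intro t ht y
    have hw : 0 < vn n t := lt_of_lt_of_le hρn (hvnS t ht)
    rw [hF', Real.norm_eq_abs, abs_div, abs_of_nonneg (hvnn t), abs_mul, abs_mul,
      abs_abs, abs_of_nonneg hw.le]
  have hbound_int : Integrable (fun t => v t * ((ρ n * ρ n * ρ n)⁻¹)) μ :=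
    hvintS.mul_const _
  have h_bound : ∀ᵐ t ∂μ, ∀ y ∈ ball x ε, ‖F' y t‖ ≤ v t * ((ρ n * ρ n * ρ n)⁻¹) := by
    filter_upwards [ae_restrict_mem hSmeas] with t ht y hy
    have hyIoo := hball hy
    have hd := hdist y hyIoo t ht
    have hw := hvnS t ht
    rw [hF'norm t ht y, ← div_eq_mul_inv]
    exact div_le_div_of_nonneg_left (hvnn t) (by positivity)
      (mul_le_mul (mul_le_mul hd hd hρn.le (abs_nonneg _)) hw hρn.le
        (mul_nonneg (abs_nonneg _) (abs_nonneg _)))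
  have hFint : Integrable (F x) μ := by
    apply (hvintS.mul_const ((ρ n * ρ n)⁻¹)).mono' (hFmeas x)
    filter_upwards [ae_restrict_mem hSmeas] with t ht
    have hd := hdist x ⟨hx1, hx2⟩ t ht
    have hw := hvnS t ht
    have hw := hvnS t ht
    rw [Real.norm_eq_abs, abs_of_nonneg (div_nonneg (hvnn t)
      (mul_nonneg (abs_nonneg _) (le_trans hρn.le hw)))]
    exact hFbound t ht x ⟨hx1, hx2⟩
  have h_diff : ∀ᵐ t ∂μ, ∀ y ∈ ball x ε, HasDerivAt (fun y => F y t) (F' y t) y := by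
    filter_upwards [ae_restrict_mem hSmeas] with t ht y hy
    have hyIoo := hball hy
    have hd := hdist y hyIoo t ht
    have hne : t - y ≠ 0 := by
      intro h0
      rw [h0, abs_zero] at hd
      linarith
    have hw : 0 < vn n t := lt_of_lt_of_le hρn (hvnS t ht)
    have h1 : HasDerivAt (fun y : ℝ => t - y) (-1) y := by
      simpa using (hasDerivAt_id y).const_sub t
    rcases hne.lt_or_gt with hlt | hlt
    · -- t - y < 0
      have h2 : HasDerivAt (fun y : ℝ => |t - y|) ((-1) * (-1)) y :=
        HasDerivAt.comp y (hasDerivAt_abs_neg hlt) h1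
      have h3 : HasDerivAt (fun y : ℝ => (|t - y|)⁻¹) (-(( -1 : ℝ) * (-1)) / (|t - y|) ^ 2) y :=
        h2.inv (abs_ne_zero.2 hne)
      have h4 : HasDerivAt (fun z : ℝ => v t / vn n t * (|t - z|)⁻¹) (_ : ℝ) y :=
        h3.const_mul (v t / vn n t)
      convert h4 using 1
      · funext z
        show v t / (|t - z| * vn n t) = v t / vn n t * (|t - z|)⁻¹
        rw [div_mul_eq_div_div_swap, div_eq_mul_inv]
      · show v t / ((t - y) * |t - y| * vn n t) = _
        rw [abs_of_neg hlt, div_mul_div_comm, div_eq_div_iff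
          (mul_ne_zero (mul_ne_zero hne (neg_ne_zero.2 hne)) hw.ne')
          (mul_ne_zero hw.ne' (pow_ne_zero 2 (neg_ne_zero.2 hne)))]
        ring
    · have h2 : HasDerivAt (fun y : ℝ => |t - y|) ((1 : ℝ) * (-1)) y :=
        HasDerivAt.comp y (hasDerivAt_abs_pos hlt) h1
      have h3 : HasDerivAt (fun y : ℝ => (|t - y|)⁻¹) (-((1 : ℝ) * (-1)) / (|t - y|) ^ 2) y :=
        h2.inv (abs_ne_zero.2 hne)
      have h4 : HasDerivAt (fun z : ℝ => v t / vn n t * (|t - z|)⁻¹) (_ : ℝ) y :=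
        h3.const_mul (v t / vn n t)
      convert h4 using 1
      · funext z
        show v t / (|t - z| * vn n t) = v t / vn n t * (|t - z|)⁻¹
        rw [div_mul_eq_div_div_swap, div_eq_mul_inv]
      · show v t / ((t - y) * |t - y| * vn n t) = _
        rw [abs_of_pos hlt, div_mul_div_comm, div_eq_div_iff
          (mul_ne_zero (mul_ne_zero hne hne) hw.ne')
          (mul_ne_zero hw.ne' (pow_ne_zero 2 hne))]
        ring
  obtain ⟨hF'int, hderiv⟩ :=
    hasDerivAt_integral_of_dominated_loc_of_deriv_le (ball_mem_nhds x hεpos)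
      (Filter.Eventually.of_forall hFmeas) hFint (hF'meas x) h_bound hbound_int h_diff
  constructor
  · have hVeq : Vn n = fun y => (1 / Real.pi) * ∫ t, F y t ∂μ := funext (hVn n)
    rw [hVeq]
    exact hderiv.const_mul (1 / Real.pi)
  · -- the estimate
    have hπ : 0 < (1 / Real.pi) := one_div_pos.2 Real.pi_pos
    have hInorm : |∫ t, F' x t ∂μ| ≤ (∫ t, F x t ∂μ) / ρ n := by
      calc |∫ t, F' x t ∂μ| ≤ ∫ t, ‖F' x t‖ ∂μ := by
            simpa [Real.norm_eq_abs] using norm_integral_le_integral_norm (F' x) (μ := μ)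
        _ ≤ ∫ t, F x t / ρ n ∂μ := by
            apply integral_mono_ae hF'int.norm (hFint.div_const _)
            filter_upwards [ae_restrict_mem hSmeas] with t ht
            have hd := hdist x ⟨hx1, hx2⟩ t ht
            have hw := hvnS t ht
            have hd := hdist x ⟨hx1, hx2⟩ t ht
            have hw := hvnS t ht
            show ‖F' x t‖ ≤ F x t / ρ n
            rw [hF'norm t ht x]
            show _ ≤ (v t / (|t - x| * vn n t)) / ρ n
            rw [div_div]
            have hvn0 : 0 ≤ vn n t := le_trans hρn.le hw
            have hden : |t - x| * vn n t * ρ n ≤ |t - x| * |t - x| * vn n t := by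
              calc |t - x| * vn n t * ρ n ≤ |t - x| * vn n t * |t - x| :=
                    mul_le_mul_of_nonneg_left hd (mul_nonneg (abs_nonneg _) hvn0)
                _ = |t - x| * |t - x| * vn n t := by ring
            exact div_le_div_of_nonneg_left (hvnn t)
              (mul_pos (mul_pos (lt_of_lt_of_le hρn hd) (lt_of_lt_of_le hρn hw)) hρn) hden
        _ = (∫ t, F x t ∂μ) / ρ n := by rw [integral_div]
    rw [hVn n x, abs_mul, abs_of_pos hπ, mul_div_assoc]
    exact mul_le_mul_of_nonneg_left hInorm hπ.le
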